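/- Let R be a commutative ring of stable range 2 and let a, b, d ∈ R satisfy aR + bR = dR. Then there exist elements a₀, b₀ ∈ R such that a = a₀·d, b = b₀·d and a₀R + b₀R = R. -/
import Mathlib


/-- A regular element: a nonzero element that is not a zero divisor. -/
def IsRegularElem {R : Type*} [CommRing R] (a : R) : Prop :=
  a ≠ 0 ∧ ∀ x : R, a * x = 0 → x = 0

/-- Stable range 2. -/
def HasStableRange2 (R : Type*) [CommRing R] : Prop :=
  ∀ a b c : R, Ideal.span {a, b, c} = ⊤ →
    ∃ x y : R, Ideal.span {a + c * x, b + c * y} = ⊤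

/-- Stable range 1. -/
def HasStableRange1 (S : Type*) [CommRing S] : Prop :=
  ∀ a b : S, Ideal.span {a, b} = ⊤ → ∃ y : S, IsUnit (a + b * y)

/-- Inpseudo-irreducible element: any factorization is comaximal. -/
def IsInpseudoIrreducible {R : Type*} [CommRing R] (a : R) : Prop :=
  ∀ b c : R, a = b * c → Ideal.span {b, c} = ⊤

/-- Pseudo-irreducible element. -/
def IsPseudoIrreducible {R : Type*} [CommRing R] (a : R) : Prop :=
  ∀ b c : R, a = b * c → ¬IsUnit b → ¬IsUnit c → Ideal.span {b, c} ≠ ⊤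

/-- Adequate element of a Bezout ring. -/
def IsAdequateElem {R : Type*} [CommRing R] (a : R) : Prop :=
  ∀ b : R, ∃ r s : R, a = r * s ∧ Ideal.span {r, b} = ⊤ ∧
    ∀ s' : R, ¬IsUnit s' → s' ∣ s → Ideal.span {s', b} ≠ ⊤

/-- Avoidable element. -/
def IsAvoidableElem {R : Type*} [CommRing R] (a : R) : Prop :=
  ∀ b c : R, Ideal.span {a, b, c} = ⊤ →
    ∃ r s : R, a = r * s ∧ Ideal.span {r, b} = ⊤ ∧ Ideal.span {s, c} = ⊤ ∧
      Ideal.span {r, s} = ⊤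

/-- Gelfand element. -/
def IsGelfandElem {R : Type*} [CommRing R] (a : R) : Prop :=
  ∀ b c : R, Ideal.span {a, b, c} = ⊤ →
    ∃ r s : R, a = r * s ∧ Ideal.span {r, b} = ⊤ ∧ Ideal.span {s, c} = ⊤

/-- Semipotent element. -/
def IsSemipotentElem {R : Type*} [CommRing R] (a : R) : Prop :=
  ∀ b : R,
    Ideal.Quotient.mk (Ideal.span {a}) b ∉
      Ideal.jacobson (⊥ : Ideal (R ⧸ Ideal.span ({a} : Set R))) →
    ∃ r s : R, ¬IsUnit r ∧ ¬IsUnit s ∧ a = r * s ∧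
      Ideal.span {r, b} = ⊤ ∧ Ideal.span {r, s} = ⊤

/-- Gelfand ring. -/
def IsGelfandRing (S : Type*) [CommRing S] : Prop :=
  ∀ a b : S, a + b = 1 → ∃ r s : S, (1 + a * r) * (1 + b * s) = 0

/-- Clean ring: every element is a unit plus an idempotent. -/
def IsCleanRing (S : Type*) [CommRing S] : Prop :=
  ∀ a : S, ∃ u e : S, IsUnit u ∧ IsIdempotentElem e ∧ a = u + e

/-- Von Neumann regular ring. -/
def IsVNRegularRing (S : Type*) [CommRing S] : Prop :=
  ∀ a : S, ∃ x : S, a = a * x * a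

/-- Semiregular ring: S/J(S) is von Neumann regular and idempotents lift modulo J(S). -/
def IsSemiregularRing (S : Type*) [CommRing S] : Prop :=
  IsVNRegularRing (S ⧸ Ideal.jacobson (⊥ : Ideal S)) ∧
  ∀ x : S, IsIdempotentElem (Ideal.Quotient.mk (Ideal.jacobson (⊥ : Ideal S)) x) →
    ∃ e : S, IsIdempotentElem e ∧
      Ideal.Quotient.mk (Ideal.jacobson (⊥ : Ideal S)) e =
        Ideal.Quotient.mk (Ideal.jacobson (⊥ : Ideal S)) x

/-- Semipotent ring: every principal ideal not contained in the Jacobson radical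
contains a nonzero idempotent. -/
def IsSemipotentRing (S : Type*) [CommRing S] : Prop :=
  ∀ b : S, ¬(Ideal.span {b} ≤ Ideal.jacobson (⊥ : Ideal S)) →
    ∃ e : S, e ≠ 0 ∧ IsIdempotentElem e ∧ e ∈ Ideal.span ({b} : Set S)

/-- Indecomposable ring: the only idempotents are 0 and 1. -/
def IsIndecomposableRing (S : Type*) [CommRing S] : Prop :=
  ∀ e : S, IsIdempotentElem e → e = 0 ∨ e = 1

/-- Semihereditary ring: every finitely generated ideal is projective. -/
def IsSemihereditaryRing (R : Type*) [CommRing R] : Prop :=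
  ∀ I : Ideal R, I.FG → Module.Projective R I

/-- Regular range 1. -/
def HasRegularRange1 (R : Type*) [CommRing R] : Prop :=
  ∀ a b : R, Ideal.span {a, b} = ⊤ → ∃ t : R, IsRegularElem (a + b * t)

/-- Gelfand range 1. -/
def HasGelfandRange1 (R : Type*) [CommRing R] : Prop :=
  ∀ a b : R, Ideal.span {a, b} = ⊤ → ∃ t : R, IsGelfandElem (a + b * t)

/-- A rectangular matrix admits diagonal reduction with successive divisibility
of the diagonal entries. -/
def AdmitsDiagReduction {R : Type*} [CommRing R] {n m : ℕ}
    (A : Matrix (Fin n) (Fin m) R) : Prop :=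
  ∃ (P : Matrix (Fin n) (Fin n) R) (Q : Matrix (Fin m) (Fin m) R),
    IsUnit P ∧ IsUnit Q ∧
    (∀ (i : Fin n) (j : Fin m), (i : ℕ) ≠ (j : ℕ) → (P * A * Q) i j = 0) ∧
    (∀ (k : ℕ) (hn : k + 1 < n) (hm : k + 1 < m),
      (P * A * Q) ⟨k, Nat.lt_of_succ_lt hn⟩ ⟨k, Nat.lt_of_succ_lt hm⟩ ∣
        (P * A * Q) ⟨k + 1, hn⟩ ⟨k + 1, hm⟩)

/-- Elementary divisor ring: every matrix admits diagonal reduction. -/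
def IsElementaryDivisorRing (R : Type*) [CommRing R] : Prop :=
  ∀ (n m : ℕ) (A : Matrix (Fin n) (Fin m) R), AdmitsDiagReduction A


theorem stmt1 {R : Type*} [CommRing R] (hR : HasStableRange2 R)
    (a b d : R) (h : Ideal.span ({a, b} : Set R) = Ideal.span ({d} : Set R)) :
    ∃ a₀ b₀ : R, a = a₀ * d ∧ b = b₀ * d ∧ Ideal.span ({a₀, b₀} : Set R) = ⊤ := by
  have ha : a ∈ Ideal.span ({d} : Set R) := h ▸ Ideal.subset_span (by simp)
  have hb : b ∈ Ideal.span ({d} : Set R) := h ▸ Ideal.subset_span (by simp)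
  rw [Ideal.mem_span_singleton] at ha hb
  obtain ⟨a₁, ha⟩ := ha
  obtain ⟨b₁, hb⟩ := hb
  have hd : d ∈ Ideal.span ({a, b} : Set R) := h ▸ Ideal.subset_span (by simp)
  rw [Ideal.mem_span_pair] at hd
  obtain ⟨u, v, hd⟩ := hd
  set c : R := 1 - (u * a₁ + v * b₁) with hc
  have hcd : c * d = 0 := by
    have : (u * a₁ + v * b₁) * d = d := by
      calc (u * a₁ + v * b₁) * d = u * a + v * b := by rw [ha, hb]; ring
        _ = d := hd
    rw [hc, sub_mul, one_mul, this, sub_self]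
  have htop : Ideal.span ({a₁, b₁, c} : Set R) = ⊤ := by
    rw [Ideal.eq_top_iff_one, Ideal.mem_span_insert]
    refine ⟨u, v * b₁ + c, ?_, by ring⟩
    rw [Ideal.mem_span_insert]
    exact ⟨v, c, Ideal.subset_span (by simp), by ring⟩
  obtain ⟨x, y, hxy⟩ := hR a₁ b₁ c htop
  refine ⟨a₁ + c * x, b₁ + c * y, ?_, ?_, hxy⟩
  · rw [add_mul, mul_assoc, mul_comm x d, ← mul_assoc, hcd]; simp [ha, mul_comm]
  · rw [add_mul, mul_assoc, mul_comm y d, ← mul_assoc, hcd]; simp [hb, mul_comm]
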